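/- Suppose q : [0, T] → ℝ is differentiable, satisfies q′(t) = ρ − pK − p·Φ(q(t)) for all t ∈ [0, T], and q(T) = 0. Define c*(t) = min( c̄, max( c̲, λ^{1/(1−p)}·e^{q(t)/(p−1)} ) ) for t ∈ [0, T]. If λ^{1/(1−p)} < c̲, then c* is nonincreasing on [0, T]. -/

import Mathlib

open Set Filter Topology Real


lemma no_sign_flip (F q : ℝ → ℝ) (hF : Monotone F)
    (a s : ℝ) (has : a ≤ s)
    (hq : ∀ t ∈ Set.Icc a s, HasDerivAt q (F (q t)) t)
    (ha : 0 < F (q a)) (hs : F (q s) ≤ 0) : False := by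
  have hlt : a < s := lt_of_le_of_ne has (by rintro rfl; linarith)
  set S : Set ℝ := {t | t ∈ Set.Icc a s ∧ F (q t) ≤ 0} with hSdef
  have hsS : s ∈ S := ⟨⟨has, le_rfl⟩, hs⟩
  have hSne : S.Nonempty := ⟨s, hsS⟩
  have hSbdd : BddBelow S := ⟨a, fun t ht => ht.1.1⟩
  set t1 := sInf S with ht1def
  have ht1a : a ≤ t1 := le_csInf hSne (fun t ht => ht.1.1)
  have ht1s : t1 ≤ s := csInf_le hSbdd hsS
  have hpos : ∀ t, a ≤ t → t < t1 → 0 < F (q t) := by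
    intro t h1 h2
    by_contra h
    push_neg at h
    have : t1 ≤ t := csInf_le hSbdd ⟨⟨h1, h2.le.trans ht1s⟩, h⟩
    linarith
  have claim : ∃ z ∈ S, q a < q z := by
    rcases eq_or_lt_of_le ht1a with h | h
    · -- t1 = a : use the slope at a
      have hd := hq a ⟨le_rfl, has⟩
      have hslope : Tendsto (slope q a) (𝓝[≠] a) (𝓝 (F (q a))) :=
        hasDerivAt_iff_tendsto_slope.1 hd
      have h1 : ∀ᶠ z in 𝓝[≠] a, 0 < slope q a z := hslope.eventually (eventually_gt_nhds ha)
      have h2 : ∀ᶠ z in 𝓝[>] a, 0 < slope q a z :=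
        h1.filter_mono (nhdsWithin_mono a (fun z hz => Set.mem_compl_singleton_iff.2 (ne_of_gt hz)))
      obtain ⟨u, hu, h3⟩ := mem_nhdsGT_iff_exists_Ioo_subset.1 h2
      obtain ⟨z, hzS, hzu⟩ := exists_lt_of_csInf_lt hSne (show sInf S < u by rw [← ht1def, ← h]; exact hu)
      have hza : a < z := by
        rcases eq_or_lt_of_le (hzS.1.1 : a ≤ z) with rfl | h'
        · exact absurd hzS.2 (not_le.2 ha)
        · exact h'
      have hsl := h3 ⟨hza, hzu⟩
      rw [Set.mem_setOf_eq, slope_def_field] at hsl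
      refine ⟨z, hzS, ?_⟩
      rcases div_pos_iff.1 hsl with ⟨h1', _⟩ | ⟨_, h2'⟩
      · linarith
      · linarith
    · -- a < t1 : q strictly increases on [a, t1]
      have hmono : StrictMonoOn q (Set.Icc a t1) := by
        apply strictMonoOn_of_deriv_pos (convex_Icc a t1)
        · exact fun t ht => (hq t ⟨ht.1, ht.2.trans ht1s⟩).continuousAt.continuousWithinAt
        · intro t ht
          rw [interior_Icc] at ht
          rw [(hq t ⟨ht.1.le, ht.2.le.trans ht1s⟩).deriv]
          exact hpos t ht.1.le ht.2
      have hqa : q a < q t1 := hmono ⟨le_rfl, ht1a⟩ ⟨ht1a, le_rfl⟩ h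
      by_cases ht1S : t1 ∈ S
      · exact ⟨t1, ht1S, hqa⟩
      · have hcont : ContinuousAt q t1 := (hq t1 ⟨ht1a, ht1s⟩).continuousAt
        have hev : q ⁻¹' Set.Ioi (q a) ∈ 𝓝 t1 := hcont (Ioi_mem_nhds hqa)
        obtain ⟨ε, hε, hball⟩ := Metric.mem_nhds_iff.1 hev
        obtain ⟨z, hzS, hz⟩ := exists_lt_of_csInf_lt hSne
          (show sInf S < t1 + ε by rw [← ht1def]; linarith)
        have hz1 : t1 ≤ z := csInf_le hSbdd hzS
        have hzb : z ∈ Metric.ball t1 ε := by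
          rw [Metric.mem_ball, Real.dist_eq, abs_lt]
          constructor <;> linarith
        exact ⟨z, hzS, hball hzb⟩
  obtain ⟨z, hzS, hz⟩ := claim
  exact absurd hzS.2 (not_le.2 (lt_of_lt_of_le ha (hF hz.le)))


lemma pPhi_anti (lam clo chi p : ℝ)
    (hlam : 0 < lam) (hclo : 0 < clo) (hc : clo < chi)
    (hp1 : p < 1) (hp0 : p ≠ 0)
    (Φ : ℝ → ℝ)
    (hΦ : ∀ x : ℝ, Φ x =
      if x < (p - 1) * Real.log chi + Real.log lam then
        lam / p * chi ^ p * Real.exp (-x) - chi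
      else if x ≤ (p - 1) * Real.log clo + Real.log lam then
        (1 - p) / p * lam ^ (1 / (1 - p)) * Real.exp (x / (p - 1))
      else
        lam / p * clo ^ p * Real.exp (-x) - clo) :
    ∀ x y : ℝ, x ≤ y → p * Φ y ≤ p * Φ x := by
  have hchi : 0 < chi := hclo.trans hc
  have hpm : p - 1 < 0 := by linarith
  have hpm' : p - 1 ≠ 0 := by linarith
  have h1p : (1 : ℝ) - p ≠ 0 := by linarith
  set a1 := (p - 1) * Real.log chi + Real.log lam with ha1
  set a2 := (p - 1) * Real.log clo + Real.log lam with ha2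
  have hA : 0 < lam ^ (1 / (1 - p)) := Real.rpow_pos_of_pos hlam _
  have ha12 : a1 ≤ a2 := by
    have := Real.log_le_log hclo hc.le
    nlinarith [mul_le_mul_of_nonpos_left this hpm.le]
  -- piece formulas
  have hP1 : ∀ z : ℝ, p * (lam / p * chi ^ p * Real.exp (-z) - chi)
      = lam * chi ^ p * Real.exp (-z) - p * chi := by
    intro z; field_simp
  have hP2 : ∀ z : ℝ, p * ((1 - p) / p * lam ^ (1 / (1 - p)) * Real.exp (z / (p - 1)))
      = (1 - p) * lam ^ (1 / (1 - p)) * Real.exp (z / (p - 1)) := by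
    intro z; field_simp
  have hP3 : ∀ z : ℝ, p * (lam / p * clo ^ p * Real.exp (-z) - clo)
      = lam * clo ^ p * Real.exp (-z) - p * clo := by
    intro z; field_simp
  -- monotonicity of pieces
  have m1 : ∀ z w : ℝ, z ≤ w →
      lam * chi ^ p * Real.exp (-w) - p * chi ≤ lam * chi ^ p * Real.exp (-z) - p * chi := by
    intro z w h
    nlinarith [mul_pos hlam (Real.rpow_pos_of_pos hchi p), Real.exp_le_exp.2 (neg_le_neg h)]
  have m3 : ∀ z w : ℝ, z ≤ w →
      lam * clo ^ p * Real.exp (-w) - p * clo ≤ lam * clo ^ p * Real.exp (-z) - p * clo := by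
    intro z w h
    nlinarith [mul_pos hlam (Real.rpow_pos_of_pos hclo p), Real.exp_le_exp.2 (neg_le_neg h)]
  have m2 : ∀ z w : ℝ, z ≤ w →
      (1 - p) * lam ^ (1 / (1 - p)) * Real.exp (w / (p - 1))
        ≤ (1 - p) * lam ^ (1 / (1 - p)) * Real.exp (z / (p - 1)) := by
    intro z w h
    have hd : w / (p - 1) ≤ z / (p - 1) := by
      rw [div_eq_mul_inv, div_eq_mul_inv]
      exact mul_le_mul_of_nonpos_right h (inv_nonpos.2 hpm.le)
    nlinarith [mul_pos (show (0:ℝ) < 1 - p by linarith) hA, Real.exp_le_exp.2 hd]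
  -- boundary matching
  have s1 : lam * chi ^ p * Real.exp (-a1) = chi := by
    rw [Real.rpow_def_of_pos hchi]
    nth_rewrite 1 [← Real.exp_log hlam]
    rw [← Real.exp_add, ← Real.exp_add]
    rw [show Real.log lam + Real.log chi * p + -a1 = Real.log chi by rw [ha1]; ring,
      Real.exp_log hchi]
  have s2 : lam ^ (1 / (1 - p)) * Real.exp (a1 / (p - 1)) = chi := by
    rw [Real.rpow_def_of_pos hlam, ← Real.exp_add]
    rw [show Real.log lam * (1 / (1 - p)) + a1 / (p - 1) = Real.log chi by
      rw [ha1]; field_simp; ring, Real.exp_log hchi]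
  have s3 : lam * clo ^ p * Real.exp (-a2) = clo := by
    rw [Real.rpow_def_of_pos hclo]
    nth_rewrite 1 [← Real.exp_log hlam]
    rw [← Real.exp_add, ← Real.exp_add]
    rw [show Real.log lam + Real.log clo * p + -a2 = Real.log clo by rw [ha2]; ring,
      Real.exp_log hclo]
  have s4 : lam ^ (1 / (1 - p)) * Real.exp (a2 / (p - 1)) = clo := by
    rw [Real.rpow_def_of_pos hlam, ← Real.exp_add]
    rw [show Real.log lam * (1 / (1 - p)) + a2 / (p - 1) = Real.log clo by
      rw [ha2]; field_simp; ring, Real.exp_log hclo]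
  have e12 : lam * chi ^ p * Real.exp (-a1) - p * chi
      = (1 - p) * lam ^ (1 / (1 - p)) * Real.exp (a1 / (p - 1)) := by
    rw [s1, mul_assoc, s2]; ring
  have e23 : (1 - p) * lam ^ (1 / (1 - p)) * Real.exp (a2 / (p - 1))
      = lam * clo ^ p * Real.exp (-a2) - p * clo := by
    rw [s3, mul_assoc, s4]; ring
  -- main case bash
  intro x y hxy
  rw [hΦ x, hΦ y]
  rcases lt_or_ge x a1 with hx1 | hx1
  · rw [if_pos hx1]
    rcases lt_or_ge y a1 with hy1 | hy1
    · rw [if_pos hy1, hP1, hP1]; exact m1 x y hxy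
    · rw [if_neg (not_lt.2 hy1)]
      rcases le_or_gt y a2 with hy2 | hy2
      · rw [if_pos hy2, hP1, hP2]
        linarith [m2 a1 y hy1, e12, m1 x a1 hx1.le]
      · rw [if_neg (not_le.2 hy2), hP1, hP3]
        linarith [m3 a2 y hy2.le, e23, m2 a1 a2 ha12, e12, m1 x a1 hx1.le]
  · rw [if_neg (not_lt.2 hx1), if_neg (not_lt.2 (hx1.trans hxy))]
    rcases le_or_gt x a2 with hx2 | hx2
    · rw [if_pos hx2]
      rcases le_or_gt y a2 with hy2 | hy2
      · rw [if_pos hy2, hP2, hP2]; exact m2 x y hxy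
      · rw [if_neg (not_le.2 hy2), hP2, hP3]
        linarith [m3 a2 y hy2.le, e23, m2 x a2 hx2]
    · rw [if_neg (not_le.2 (hx2.trans_le hxy)), if_neg (not_le.2 hx2), hP3, hP3]
      exact m3 x y hxy

/-- If `λ^{1/(1-p)} < c̲`, the optimal consumption `c*` is nonincreasing on `[0, T]`. -/
theorem power_consumption_nonincreasing
    (T ρ K lam clo chi p : ℝ) (hT : 0 < T) (hρ : 0 ≤ ρ)
    (hlam : 0 < lam) (hclo : 0 < clo) (hc : clo < chi)
    (hp1 : p < 1) (hp0 : p ≠ 0)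
    (Φ : ℝ → ℝ)
    (hΦ : ∀ x : ℝ, Φ x =
      if x < (p - 1) * Real.log chi + Real.log lam then
        lam / p * chi ^ p * Real.exp (-x) - chi
      else if x ≤ (p - 1) * Real.log clo + Real.log lam then
        (1 - p) / p * lam ^ (1 / (1 - p)) * Real.exp (x / (p - 1))
      else
        lam / p * clo ^ p * Real.exp (-x) - clo)
    (q : ℝ → ℝ)
    (hq : ∀ t ∈ Set.Icc (0 : ℝ) T, HasDerivAt q (ρ - p * K - p * Φ (q t)) t)
    (hqT : q T = 0)
    (cstar : ℝ → ℝ)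
    (hcstar : ∀ t : ℝ,
      cstar t = min chi (max clo (lam ^ (1 / (1 - p)) * Real.exp (q t / (p - 1)))))
    (hcase : lam ^ (1 / (1 - p)) < clo) :
    AntitoneOn cstar (Set.Icc 0 T) := by
  have hpm : p - 1 < 0 := by linarith
  have hA : 0 < lam ^ (1 / (1 - p)) := Real.rpow_pos_of_pos hlam _
  have hΦanti := pPhi_anti lam clo chi p hlam hclo hc hp1 hp0 Φ hΦ
  set F : ℝ → ℝ := fun x => ρ - p * K - p * Φ x with hFdef
  have hFmono : Monotone F := by
    intro x y h
    simp only [hFdef]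
    have := hΦanti x y h
    linarith
  have hq' : ∀ t ∈ Set.Icc (0 : ℝ) T, HasDerivAt q (F (q t)) t := fun t ht => hq t ht
  have hdich : (∀ t ∈ Set.Icc (0 : ℝ) T, 0 ≤ F (q t)) ∨
      (∀ t ∈ Set.Icc (0 : ℝ) T, F (q t) ≤ 0) := by
    by_contra h
    push_neg at h
    obtain ⟨⟨t1, ht1, h1⟩, ⟨t2, ht2, h2⟩⟩ := h
    rcases le_total t2 t1 with hle | hle
    · exact no_sign_flip F q hFmono t2 t1 hle
        (fun t ht => hq' t ⟨ht2.1.trans ht.1, ht.2.trans ht1.2⟩) h2 h1.le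
    · refine no_sign_flip (fun y => -F (-y)) (fun t => -(q t))
        (fun y1 y2 hy => neg_le_neg (hFmono (neg_le_neg hy))) t1 t2 hle
        (fun t ht => ?_) (by simpa using h1) (by simpa using h2.le)
      have := (hq' t ⟨ht1.1.trans ht.1, ht.2.trans ht2.2⟩).neg
      simp only [neg_neg]
      exact this
  rcases hdich with hpos | hneg
  · -- q is monotone nondecreasing
    have hqm : MonotoneOn q (Set.Icc 0 T) := by
      apply monotoneOn_of_deriv_nonneg (convex_Icc 0 T)
      · exact fun t ht => (hq' t ht).continuousAt.continuousWithinAt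
      · intro t ht
        rw [interior_Icc] at ht
        exact (hq' t (Ioo_subset_Icc_self ht)).differentiableAt.differentiableWithinAt
      · intro t ht
        rw [interior_Icc] at ht
        rw [(hq' t (Ioo_subset_Icc_self ht)).deriv]
        exact hpos t (Ioo_subset_Icc_self ht)
    intro x hx y hy hxy
    rw [hcstar x, hcstar y]
    have hqle : q x ≤ q y := hqm hx hy hxy
    have hd : q y / (p - 1) ≤ q x / (p - 1) := by
      rw [div_eq_mul_inv, div_eq_mul_inv]
      exact mul_le_mul_of_nonpos_right hqle (inv_nonpos.2 hpm.le)
    exact min_le_min le_rfl (max_le_max le_rfl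
      (mul_le_mul_of_nonneg_left (Real.exp_le_exp.2 hd) hA.le))
  · -- q is nonincreasing, hence q ≥ 0 and cstar is constant
    have hqm : AntitoneOn q (Set.Icc 0 T) := by
      apply antitoneOn_of_deriv_nonpos (convex_Icc 0 T)
      · exact fun t ht => (hq' t ht).continuousAt.continuousWithinAt
      · intro t ht
        rw [interior_Icc] at ht
        exact (hq' t (Ioo_subset_Icc_self ht)).differentiableAt.differentiableWithinAt
      · intro t ht
        rw [interior_Icc] at ht
        rw [(hq' t (Ioo_subset_Icc_self ht)).deriv]
        exact hneg t (Ioo_subset_Icc_self ht)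
    have hconst : ∀ t ∈ Set.Icc (0 : ℝ) T, cstar t = clo := by
      intro t ht
      have hq0 : 0 ≤ q t := by
        rw [← hqT]; exact hqm ht ⟨hT.le, le_rfl⟩ ht.2
      have hle : lam ^ (1 / (1 - p)) * Real.exp (q t / (p - 1)) ≤ clo := by
        have he : Real.exp (q t / (p - 1)) ≤ 1 := by
          rw [Real.exp_le_one_iff]
          exact div_nonpos_of_nonneg_of_nonpos hq0 hpm.le
        nlinarith
      rw [hcstar t, max_eq_left hle, min_eq_right hc.le]
    intro x hx y hy hxy
    rw [hconst x hx, hconst y hy]
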